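/- arXiv:1810.04587 — 6 statements merged into one kernel-verified Lean document; each statement's English description precedes it below -/
import Mathlib

section
/- Let p be a prime, f, k positive integers, and x an integer. Then the sum of the p-adic digits of the representative of ((p^{fk}-1)/(p^f-1))·x modulo p^{fk}-1 taken in the range [1, p^{fk}-1] equals k times the sum of the p-adic digits of the representative of x modulo p^f-1 taken in the range [1, p^f-1]. -/
lemma digitSum_pow_sub_one (p n : ℕ) (hp : 1 < p) :
    (Nat.digits p (p ^ n - 1)).sum = n * (p - 1) := by
  induction n with
  | zero => simp
  | succ n ih =>
    have h1 : p ^ (n + 1) - 1 = (p - 1) + p * (p ^ n - 1) := by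
      have h2 : 1 ≤ p := hp.le
      have h3 : 1 ≤ p ^ n := Nat.one_le_pow _ _ (by omega)
      have : p * (p ^ n - 1) = p ^ (n+1) - p := by
        rw [Nat.mul_sub, pow_succ, mul_comm, mul_one]
      have h5 : p ≤ p ^ (n+1) := Nat.le_self_pow (by omega) p
      omega
    rw [h1, Nat.digits_add p hp (p-1) (p ^ n - 1) (by omega) (Or.inl (by omega))]
    simp [ih]
    ring

lemma digitSum_add_pow_mul (p f a b : ℕ) (hp : 1 < p) (ha : a < p ^ f) :
    (Nat.digits p (a + p ^ f * b)).sum = (Nat.digits p a).sum + (Nat.digits p b).sum := by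
  rcases Nat.eq_zero_or_pos b with rfl | hb
  · simp
  have hlen : (Nat.digits p a).length ≤ f := by
    rcases Nat.eq_zero_or_pos a with rfl | ha0
    · simp
    rw [Nat.digits_len p a hp (by omega)]
    have := Nat.log_lt_of_lt_pow (by omega : a ≠ 0) ha
    omega
  have := Nat.digits_append_zeroes_append_digits (b := p) (k := f - (Nat.digits p a).length)
    (m := b) (n := a) hp hb
  rw [Nat.add_sub_cancel' hlen] at this
  rw [← this]
  simp

lemma digitSum_geom_mul (p f : ℕ) (hp : 1 < p) (_hf : 0 < f) :
    ∀ (k r : ℕ), r < p ^ f →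
      (Nat.digits p ((∑ i ∈ Finset.range k, (p ^ f) ^ i) * r)).sum
        = k * (Nat.digits p r).sum := by
  intro k
  induction k with
  | zero => simp
  | succ k ih =>
    intro r hr
    have h1 : (∑ i ∈ Finset.range (k+1), (p ^ f) ^ i) * r
        = r + p ^ f * ((∑ i ∈ Finset.range k, (p ^ f) ^ i) * r) := by
      rw [geom_sum_succ]
      ring
    rw [h1, digitSum_add_pow_mul p f _ _ hp hr, ih r hr]
    ring


/-- Base-`p` digit sum. -/
def digitSum (p n : ℕ) : ℕ := (Nat.digits p n).sum

/-- Digit sum of the representative of `y` modulo `m` lying in `[1, m]`. -/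
def repDigitSumPos (p m : ℕ) (y : ℤ) : ℕ :=
  if (m : ℤ) ∣ y then digitSum p m else digitSum p (y % (m : ℤ)).toNat

theorem hasse_davenport_digit_relation (p f k : ℕ) (hp : p.Prime)
    (hf : 0 < f) (hk : 0 < k) (x : ℤ) :
    repDigitSumPos p (p ^ (f * k) - 1) ((((p ^ (f * k) - 1) / (p ^ f - 1) : ℕ) : ℤ) * x)
      = k * repDigitSumPos p (p ^ f - 1) x := by
  have hp1 : 1 < p := hp.one_lt
  set q : ℕ := p ^ f with hq
  have hq2 : 2 ≤ q := by
    calc 2 = 2 ^ 1 := rfl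
    _ ≤ 2 ^ f := Nat.pow_le_pow_right (by omega) hf
    _ ≤ p ^ f := Nat.pow_le_pow_left hp1 f
  set S : ℕ := ∑ i ∈ Finset.range k, q ^ i with hS
  have hQK : p ^ (f * k) = q ^ k := by rw [hq, ← pow_mul]
  have hgeom : (q - 1) * S = q ^ k - 1 := by
    have h1 : ((q - 1 : ℕ) : ℤ) = (q : ℤ) - 1 := by omega
    have h2 : ((q ^ k - 1 : ℕ) : ℤ) = (q : ℤ) ^ k - 1 := by
      have hle : 1 ≤ q ^ k := Nat.one_le_pow _ _ (by omega)
      rw [Nat.cast_sub hle]; push_cast; ring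
    have key : (((q - 1) * S : ℕ) : ℤ) = ((q ^ k - 1 : ℕ) : ℤ) := by
      rw [h2]
      push_cast [h1]
      rw [hS]
      push_cast
      rw [mul_comm]
      exact geom_sum_mul _ k
    exact_mod_cast key
  have hM : p ^ (f * k) - 1 = (q - 1) * S := by rw [hQK, hgeom]
  have hMcast : ((p ^ (f * k) - 1 : ℕ) : ℤ) = ((q - 1 : ℕ) : ℤ) * ((S : ℕ) : ℤ) := by
    exact_mod_cast congrArg (fun n : ℕ => (n : ℤ)) hM
  have hc : (p ^ (f * k) - 1) / (p ^ f - 1) = S := by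
    rw [hQK, ← hq, ← hgeom, Nat.mul_div_cancel_left _ (by omega : 0 < q - 1)]
  have hS1 : 1 ≤ S := by
    rw [hS]
    calc 1 = ∑ i ∈ Finset.range 1, q ^ i := by simp
    _ ≤ _ := Finset.sum_le_sum_of_subset (by simpa using hk)
  rw [hc]
  by_cases h : ((q - 1 : ℕ) : ℤ) ∣ x
  · have hdvd : ((p ^ (f * k) - 1 : ℕ) : ℤ) ∣ ((S : ℕ) : ℤ) * x := by
      obtain ⟨t, rfl⟩ := h
      exact ⟨t, by rw [hMcast]; ring⟩
    rw [repDigitSumPos, repDigitSumPos, if_pos hdvd, if_pos h]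
    show digitSum p (p ^ (f * k) - 1) = k * digitSum p (p ^ f - 1)
    rw [digitSum, digitSum, digitSum_pow_sub_one p (f * k) hp1,
      digitSum_pow_sub_one p f hp1]
    ring
  · have hndvd : ¬ ((p ^ (f * k) - 1 : ℕ) : ℤ) ∣ ((S : ℕ) : ℤ) * x := by
      rintro ⟨t, ht⟩
      apply h
      refine ⟨t, ?_⟩
      have hSne : ((S : ℕ) : ℤ) ≠ 0 := by exact_mod_cast (by omega : (S : ℕ) ≠ 0)
      have h2 : ((S : ℕ) : ℤ) * x = ((S : ℕ) : ℤ) * (((q - 1 : ℕ) : ℤ) * t) := by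
        rw [ht, hMcast]; ring
      exact mul_left_cancel₀ hSne h2
    rw [repDigitSumPos, repDigitSumPos, if_neg hndvd, if_neg h]
    set r : ℤ := x % ((q - 1 : ℕ) : ℤ) with hr
    have hm0 : (0 : ℤ) < ((q - 1 : ℕ) : ℤ) := by exact_mod_cast (by omega : 0 < q - 1)
    have hr0 : 0 ≤ r := Int.emod_nonneg x (by omega)
    have hrlt : r < ((q - 1 : ℕ) : ℤ) := Int.emod_lt_of_pos x hm0
    have hmod : (((S : ℕ) : ℤ) * x) % ((p ^ (f * k) - 1 : ℕ) : ℤ) = ((S : ℕ) : ℤ) * r := by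
      have hdvd2 : ((p ^ (f * k) - 1 : ℕ) : ℤ) ∣ ((S : ℕ) : ℤ) * x - ((S : ℕ) : ℤ) * r := by
        have hxr : ((q - 1 : ℕ) : ℤ) ∣ x - r := Int.dvd_self_sub_of_emod_eq rfl
        obtain ⟨t, ht⟩ := hxr
        exact ⟨t, by rw [hMcast, ← mul_sub, ht]; ring⟩
      have heq : (((S : ℕ) : ℤ) * x) % ((p ^ (f * k) - 1 : ℕ) : ℤ)
          = (((S : ℕ) : ℤ) * r) % ((p ^ (f * k) - 1 : ℕ) : ℤ) :=
        Int.emod_eq_emod_iff_emod_sub_eq_zero.mpr (Int.emod_eq_zero_of_dvd hdvd2)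
      rw [heq]
      refine Int.emod_eq_of_lt (mul_nonneg (Int.natCast_nonneg _) hr0) ?_
      calc ((S : ℕ) : ℤ) * r < ((S : ℕ) : ℤ) * ((q - 1 : ℕ) : ℤ) :=
            mul_lt_mul_of_pos_left hrlt (by exact_mod_cast hS1)
      _ = ((p ^ (f * k) - 1 : ℕ) : ℤ) := by rw [hMcast]; ring
    rw [hmod]
    have htn : (((S : ℕ) : ℤ) * r).toNat = S * r.toNat := by
      have h1 : ((S : ℕ) : ℤ) * r = ((S * r.toNat : ℕ) : ℤ) := by
        push_cast [Int.toNat_of_nonneg hr0]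
        rfl
      rw [h1, Int.toNat_natCast]
    rw [htn, digitSum, digitSum, hS]
    exact digitSum_geom_mul p f hp1 hf k r.toNat
      (by have : r < (q : ℤ) := hrlt.trans_le (by exact_mod_cast Nat.sub_le q 1); omega)
end

section
/- Let p be a prime, f a positive integer, and x a strictly positive integer. Then the sum of the base-p digits of the representative of x modulo p^f-1 in [1, p^f-1] is at most the sum of the base-p digits of x itself. -/
lemma key_sum {p : ℕ} (hp : 1 < p) (n N : ℕ) (hN : Nat.log p n < N) :
    (p - 1) * ∑ i ∈ Finset.range N, n / p ^ (i + 1) = n - digitSum p n := by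
  rw [digitSum, ← Nat.sub_one_mul_sum_log_div_pow_eq_sub_sum_digits (p := p) n]
  congr 1
  refine (Finset.sum_subset (Finset.range_subset_range.mpr hN) ?_).symm
  intro i _ hi
  simp only [Finset.mem_range, not_lt] at hi
  exact Nat.div_eq_of_lt (lt_of_lt_of_le (Nat.lt_pow_succ_log_self hp n)
    (Nat.pow_le_pow_right (le_of_lt hp) (by omega)))

lemma digitSum_add_le {p : ℕ} (hp : 1 < p) (a b : ℕ) :
    digitSum p (a + b) ≤ digitSum p a + digitSum p b := by
  set N := Nat.log p (a + b) + 1 with hNdef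
  have hNa : Nat.log p a < N := lt_of_le_of_lt (Nat.log_mono_right (Nat.le_add_right a b))
    (Nat.lt_succ_self _)
  have hNb : Nat.log p b < N := lt_of_le_of_lt (Nat.log_mono_right (Nat.le_add_left b a))
    (Nat.lt_succ_self _)
  have ha := key_sum hp a N hNa
  have hb := key_sum hp b N hNb
  have hab := key_sum hp (a + b) N (Nat.lt_succ_self _)
  have hmono : (p - 1) * ∑ i ∈ Finset.range N, a / p ^ (i + 1)
      + (p - 1) * ∑ i ∈ Finset.range N, b / p ^ (i + 1)
      ≤ (p - 1) * ∑ i ∈ Finset.range N, (a + b) / p ^ (i + 1) := by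
    rw [← Nat.mul_add]
    refine Nat.mul_le_mul_left _ ?_
    rw [← Finset.sum_add_distrib]
    exact Finset.sum_le_sum fun i _ => Nat.add_div_le_add_div a b _
  have h1 : digitSum p a ≤ a := Nat.digit_sum_le p a
  have h2 : digitSum p b ≤ b := Nat.digit_sum_le p b
  have h3 : digitSum p (a + b) ≤ a + b := Nat.digit_sum_le p (a + b)
  omega

lemma digitSum_split {p : ℕ} (hp : 1 < p) {f q r : ℕ} (hq : 0 < q) (hr : r < p ^ f) :
    digitSum p (p ^ f * q + r) = digitSum p r + digitSum p q := by
  have hlen : (Nat.digits p r).length ≤ f := by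
    rcases eq_or_ne r 0 with rfl | h
    · simp
    · rw [Nat.digits_len p r hp h]
      have := Nat.log_lt_of_lt_pow h hr
      omega
  obtain ⟨k, hk⟩ : ∃ k, (Nat.digits p r).length + k = f :=
    ⟨f - (Nat.digits p r).length, by omega⟩
  have hds := Nat.digits_append_zeroes_append_digits (b := p) (k := k) (m := q) (n := r) hp hq
  rw [hk] at hds
  have : p ^ f * q + r = r + p ^ f * q := by ring
  rw [digitSum, this, ← hds]
  simp [digitSum, List.sum_append]

theorem repDigitSumPos_le_digitSum (p f x : ℕ) (hp : p.Prime) (hf : 0 < f) (hx : 0 < x) :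
    repDigitSumPos p (p ^ f - 1) (x : ℤ) ≤ digitSum p x := by
  have hp1 : 1 < p := hp.one_lt
  have hpf : 1 < p ^ f := Nat.one_lt_pow hf.ne' hp1
  set m : ℕ := p ^ f - 1 with hmdef
  have hm0 : 0 < m := by omega
  have hmcast : (m : ℤ) = (p : ℤ) ^ f - 1 := by push_cast [hmdef, Nat.cast_sub hpf.le]; ring
  induction x using Nat.strong_induction_on with
  | _ x ih =>
  by_cases hxm : x < p ^ f
  · have hxle : x ≤ m := by omega
    rw [repDigitSumPos]
    split_ifs with hdvd
    · have hdvd' : m ∣ x := Int.natCast_dvd_natCast.mp hdvd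
      have : x = m := le_antisymm hxle (Nat.le_of_dvd hx hdvd')
      rw [this]
    · have hxne : x ≠ m := by
        intro h; exact hdvd (h ▸ dvd_refl _)
      have hxlt : x < m := lt_of_le_of_ne hxle hxne
      rw [Int.emod_eq_of_lt (by positivity) (by exact_mod_cast hxlt)]
      simp
  · push_neg at hxm
    obtain ⟨q, r, hr, hxeq⟩ : ∃ q r, r < p ^ f ∧ p ^ f * q + r = x :=
      ⟨x / p ^ f, x % p ^ f, Nat.mod_lt x (by omega), Nat.div_add_mod x (p ^ f)⟩
    have hq : 0 < q := by
      rcases Nat.eq_zero_or_pos q with rfl | h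
      · simp at hxeq; omega
      · exact h
    have hylt : q + r < x := by
      have hql : q < p ^ f * q := by
        calc q = 1 * q := (one_mul q).symm
        _ < p ^ f * q := Nat.mul_lt_mul_of_lt_of_le hpf le_rfl hq
      omega
    have hy0 : 0 < q + r := by omega
    have hsub : (m : ℤ) ∣ (x : ℤ) - ((q + r : ℕ) : ℤ) := by
      refine ⟨(q : ℤ), ?_⟩
      have : ((p ^ f * q + r : ℕ) : ℤ) = (x : ℤ) := by exact_mod_cast hxeq
      push_cast at this ⊢
      rw [hmcast]
      linarith
    have hdvd_iff : ((m : ℤ) ∣ (x : ℤ)) ↔ ((m : ℤ) ∣ ((q + r : ℕ) : ℤ)) := by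
      constructor
      · intro h; have := dvd_sub h hsub; simpa using this
      · intro h; have := dvd_add h hsub; simpa using this
    have hmod : (x : ℤ) % (m : ℤ) = ((q + r : ℕ) : ℤ) % (m : ℤ) := by
      rw [Int.emod_eq_emod_iff_emod_sub_eq_zero]
      exact Int.emod_eq_zero_of_dvd hsub
    have hrep : repDigitSumPos p m (x : ℤ) = repDigitSumPos p m ((q + r : ℕ) : ℤ) := by
      rw [repDigitSumPos, repDigitSumPos, hmod]
      exact if_congr hdvd_iff rfl rfl
    calc repDigitSumPos p m (x : ℤ) = repDigitSumPos p m ((q + r : ℕ) : ℤ) := hrep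
      _ ≤ digitSum p (q + r) := ih (q + r) hylt hy0
      _ ≤ digitSum p q + digitSum p r := digitSum_add_le hp1 q r
      _ = digitSum p r + digitSum p q := Nat.add_comm _ _
      _ = digitSum p (p ^ f * q + r) := (digitSum_split hp1 hq hr).symm
      _ = digitSum p x := by rw [hxeq]
end

section
/- For every positive integer f and all integers x, y with 0 ≤ x, y < 3^f, the base-3 digit sum of 23x + 5y + (3^f−1)/2 is at most (base-3 digit sum of x) + (base-3 digit sum of y) + f + 2. -/
def psiAux : ℕ → ℕ := fun c =>
  [2, 3, 4, 3, 4, 3, 4, 5, 4, 3, 4, 3, 4, 5, 4, 3, 4, 5, 4, 5, 4, 5, 6, 5, 4, 5, 6, 3, 4].getD c 0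

lemma psi_base : ∀ c < 29, (Nat.digits 3 c).sum ≤ psiAux c := by
  intro c hc
  interval_cases c <;> norm_num [psiAux]

lemma psi_step : ∀ r < 3, ∀ t < 3, ∀ c < 29,
    (23 * r + 5 * t + 1 + c) % 3 + psiAux ((23 * r + 5 * t + 1 + c) / 3)
      ≤ r + t + 1 + psiAux c := by decide

lemma sum_digits_three (n : ℕ) :
    (Nat.digits 3 n).sum = n % 3 + (Nat.digits 3 (n / 3)).sum := by
  rcases Nat.eq_zero_or_pos n with h | h
  · simp [h]
  · rw [Nat.digits_def' (by norm_num) h]; simp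

lemma gen_ineq : ∀ f x y c, x < 3 ^ f → y < 3 ^ f → c < 29 →
    (Nat.digits 3 (23 * x + 5 * y + (3 ^ f - 1) / 2 + c)).sum
      ≤ (Nat.digits 3 x).sum + (Nat.digits 3 y).sum + f + psiAux c := by
  intro f
  induction f with
  | zero =>
    intro x y c hx hy hc
    interval_cases x
    interval_cases y
    simpa using psi_base c hc
  | succ g ih =>
    intro x y c hx hy hc
    set r := x % 3 with hr
    set t := y % 3 with ht
    set a := x / 3 with ha
    set b := y / 3 with hb
    have hodd : Odd (3 ^ g) := Odd.pow (by decide : Odd 3)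
    obtain ⟨m', hm'⟩ := hodd
    have hpow : 3 ^ (g + 1) = 3 * 3 ^ g := by ring
    have hmval : (3 ^ (g + 1) - 1) / 2 = 3 * ((3 ^ g - 1) / 2) + 1 := by omega
    have hm2 : (3 ^ g - 1) / 2 = m' := by omega
    have hkey : 23 * x + 5 * y + (3 ^ (g+1) - 1) / 2 + c
        = 3 * (23 * a + 5 * b + (3 ^ g - 1) / 2 + (23 * r + 5 * t + 1 + c) / 3)
          + (23 * r + 5 * t + 1 + c) % 3 := by
      have h1 : x = 3 * a + r := by omega
      have h2 : y = 3 * b + t := by omega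
      have h3 : 23 * r + 5 * t + 1 + c
          = 3 * ((23 * r + 5 * t + 1 + c) / 3) + (23 * r + 5 * t + 1 + c) % 3 := by omega
      rw [hmval]
      omega
    have hr3 : r < 3 := Nat.mod_lt _ (by norm_num)
    have ht3 : t < 3 := Nat.mod_lt _ (by norm_num)
    have hc' : (23 * r + 5 * t + 1 + c) / 3 < 29 := by omega
    have hax : a < 3 ^ g := by
      rw [ha]; exact Nat.div_lt_of_lt_mul (by rw [← hpow]; omega)
    have hby : b < 3 ^ g := by
      rw [hb]; exact Nat.div_lt_of_lt_mul (by rw [← hpow]; omega)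
    have IH := ih a b ((23 * r + 5 * t + 1 + c) / 3) hax hby hc'
    have hstep := psi_step r hr3 t ht3 c hc
    have hx3 := sum_digits_three x
    have hy3 := sum_digits_three y
    rw [← hr, ← ha] at hx3
    rw [← ht, ← hb] at hy3
    set A := 23 * a + 5 * b + (3 ^ g - 1) / 2 + (23 * r + 5 * t + 1 + c) / 3 with hA
    set d := (23 * r + 5 * t + 1 + c) % 3 with hd
    have hd3 : d < 3 := by omega
    rw [hkey, sum_digits_three]
    have e1 : (3 * A + d) % 3 = d := by omega
    have e2 : (3 * A + d) / 3 = A := by omega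
    rw [e1, e2, hx3, hy3]
    omega

theorem key_digit_inequality (f x y : ℕ) (hf : 0 < f) (hx : x < 3 ^ f) (hy : y < 3 ^ f) :
    (Nat.digits 3 (23 * x + 5 * y + (3 ^ f - 1) / 2)).sum
      ≤ (Nat.digits 3 x).sum + (Nat.digits 3 y).sum + f + 2 := by
  have h := gen_ineq f x y 0 hx hy (by norm_num)
  simpa [psiAux] using h
end

section
/- Let p be a prime and F ∈ k[x] a polynomial over an algebraically closed field k of characteristic p, such that for every t ∈ k the equations F(x)=t and F'(x)=0 have no common solution. Then F'(x) is a nonzero constant A, and F(x) = G(x)^p + Ax for some polynomial G. In particular, if deg F > 1, then p divides deg F. -/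
open Polynomial

theorem etale_selfmap_of_affine_line {k : Type*} [Field k] [IsAlgClosed k]
    (p : ℕ) [hp : Fact p.Prime] [CharP k p] (F : k[X])
    (h : ∀ t x : k, F.eval x = t → (derivative F).eval x ≠ 0) :
    ∃ A : k, A ≠ 0 ∧ derivative F = C A ∧
      (∃ G : k[X], F = G ^ p + C A * X) ∧
      (1 < F.natDegree → p ∣ F.natDegree) := by
  -- derivative F has no roots, hence is a nonzero constant
  have hd0 : derivative F ≠ 0 := by
    intro h0
    exact h (F.eval 0) 0 rfl (by rw [h0]; simp)
  have hdeg : (derivative F).natDegree = 0 := by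
    by_contra hne
    obtain ⟨x, hx⟩ := IsAlgClosed.exists_root (derivative F)
      (by simpa [Polynomial.degree_eq_natDegree hd0] using
        fun hh => hne (by exact_mod_cast hh))
    exact h (F.eval x) x rfl (by rwa [← IsRoot.def])
  set A := (derivative F).coeff 0 with hA
  have hdC : derivative F = C A := eq_C_of_natDegree_eq_zero hdeg
  have hAne : A ≠ 0 := fun h0 => hd0 (by rw [hdC, h0, map_zero])
  refine ⟨A, hAne, hdC, ?_, ?_⟩
  · have hder : derivative (F - C A * X) = 0 := by
      rw [derivative_sub, hdC, derivative_C_mul, derivative_X, mul_one, sub_self]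
    have := expand_contract p hder hp.out.ne_zero
    refine ⟨((contract p (F - C A * X)).map ((frobeniusEquiv k p).symm : k →+* k)), ?_⟩
    rw [← polynomial_expand_eq, this]
    ring
  · intro hlt
    have hder : derivative (F - C A * X) = 0 := by
      rw [derivative_sub, hdC, derivative_C_mul, derivative_X, mul_one, sub_self]
    have hexp := expand_contract p hder hp.out.ne_zero
    set G := ((contract p (F - C A * X)).map ((frobeniusEquiv k p).symm : k →+* k)) with hG
    have hGp : G ^ p = F - C A * X := by
      rw [hG, ← polynomial_expand_eq, hexp]
    have hdeq : (F - C A * X).natDegree = F.natDegree := by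
      apply natDegree_sub_eq_left_of_natDegree_lt
      calc (C A * X).natDegree ≤ 1 := by
            simpa using natDegree_C_mul_le A X
        _ < F.natDegree := hlt
    have : F.natDegree = p * G.natDegree := by
      rw [← hdeq, ← hGp, natDegree_pow]
    exact ⟨G.natDegree, this⟩
end

section
/- Let K be a finite field of odd characteristic p, ψ a nontrivial additive character of K, and d_1 < d_2 < ... < d_{r+1} positive integers. For multiplicative characters ρ_1, ..., ρ_{r+1} of K^×, the multiplicative-character Mellin transform of the function F(t_1,...,t_{r+1}) := Σ_{x∈K^×} ψ(Σ_i t_i x^{d_i}) χ_2(x) (where χ_2 is the quadratic character) equals (q−1)·Π_i g(ψ, ρ_i) if Π_i ρ_i^{d_i} = χ_2, and equals 0 otherwise. Here the Mellin transform is Σ_{(t_1,...,t_{r+1}) ∈ (K^×)^{r+1}} F(t_1,...,t_{r+1}) Π_i ρ_i(t_i), and g(ψ,ρ) := Σ_{t∈K^×} ψ(t)ρ(t) is the Gauss sum. -/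
open Finset

private lemma addChar_map_sum' {K : Type*} [Field K] (ψ : AddChar K ℂ) {ι : Type*}
    (s : Finset ι) (f : ι → K) : ψ (∑ i ∈ s, f i) = ∏ i ∈ s, ψ (f i) := by
  induction s using Finset.cons_induction with
  | empty => simp
  | cons a s h ih => rw [Finset.sum_cons, Finset.prod_cons, AddChar.map_add_eq_mul, ih]

private lemma mulChar_prod_apply' {K : Type*} [Field K] {ι : Type*}
    (s : Finset ι) (χ : ι → MulChar K ℂ) (x : Kˣ) :
    (∏ i ∈ s, χ i) (x : K) = ∏ i ∈ s, χ i (x : K) := by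
  induction s using Finset.cons_induction with
  | empty => simp [MulChar.one_apply_coe]
  | cons a s h ih => rw [Finset.prod_cons, MulChar.mul_apply, ih, Finset.prod_cons]

private lemma sum_units_eq_sum_field {K : Type*} [Field K] [Fintype K] [DecidableEq K]
    (μ : MulChar K ℂ) : ∑ x : Kˣ, μ (x : K) = ∑ x : K, μ x := by
  classical
  have himg : ∑ x ∈ (Finset.univ : Finset Kˣ).image (fun u : Kˣ => (u : K)), μ x
      = ∑ u : Kˣ, μ (u : K) := Finset.sum_image (fun x _ y _ h => Units.ext h)
  rw [← himg]
  refine Finset.sum_subset (Finset.subset_univ _) (fun x _ hx => ?_)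
  refine MulChar.map_nonunit μ (fun hu => hx ?_)
  simp only [Finset.mem_image, Finset.mem_univ, true_and]
  exact ⟨hu.unit, rfl⟩

theorem mellin_transform_chi2 {K : Type*} [Field K] [Fintype K] [DecidableEq K]
    (hch : ringChar K ≠ 2) (ψ : AddChar K ℂ) (hψ : ψ ≠ 1)
    (r : ℕ) (d : Fin (r + 1) → ℕ) (hd : StrictMono d) (hdpos : ∀ i, 0 < d i)
    (ρ : Fin (r + 1) → MulChar K ℂ) :
    (∑ t : Fin (r + 1) → Kˣ,
        (∑ x : Kˣ, ψ (∑ i, (t i : K) * (x : K) ^ d i) *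
            ((quadraticChar K).ringHomComp (Int.castRingHom ℂ)) (x : K)) *
          ∏ i, ρ i (t i))
      = if (∏ i, (ρ i) ^ d i) = (quadraticChar K).ringHomComp (Int.castRingHom ℂ) then
          ((Fintype.card K : ℂ) - 1) * ∏ i, ∑ x : Kˣ, ψ (x : K) * ρ i (x : K)
        else 0 := by
  classical
  set χ := (quadraticChar K).ringHomComp (Int.castRingHom ℂ) with hχdef
  set g : Fin (r + 1) → ℂ := fun i => ∑ x : Kˣ, ψ (x : K) * ρ i (x : K) with hg
  set μ := χ * (∏ i, (ρ i) ^ d i)⁻¹ with hμ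
  have key : ∀ (x : Kˣ) (i : Fin (r + 1)),
      (∑ u : Kˣ, ψ ((u : K) * (x : K) ^ d i) * ρ i (u : K))
        = ρ i (((x : K) ^ d i)⁻¹) * g i := by
    intro x i
    have hx : ((x : K) ^ d i) ≠ 0 := pow_ne_zero _ (Units.ne_zero x)
    rw [hg, Finset.mul_sum]
    refine Fintype.sum_equiv (Equiv.mulRight (x ^ d i)) _ _ (fun u => ?_)
    simp only [Equiv.coe_mulRight, Units.val_mul, Units.val_pow_eq_pow_val, map_mul]
    have : ρ i (((x : K) ^ d i)⁻¹) * (ψ ((u : K) * (x : K) ^ d i)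
          * (ρ i (u : K) * ρ i ((x : K) ^ d i)))
        = (ρ i (((x : K) ^ d i)⁻¹) * ρ i ((x : K) ^ d i))
          * (ψ ((u : K) * (x : K) ^ d i) * ρ i (u : K)) := by
      ring
    rw [this, ← map_mul, inv_mul_cancel₀ hx, map_one, one_mul]
  have main : (∑ t : Fin (r + 1) → Kˣ,
        (∑ x : Kˣ, ψ (∑ i, (t i : K) * (x : K) ^ d i) * χ (x : K)) * ∏ i, ρ i (t i))
      = (∏ i, g i) * ∑ x : Kˣ, μ (x : K) := by
    simp_rw [Finset.sum_mul]
    rw [Finset.sum_comm]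
    have step : ∀ x : Kˣ,
        (∑ t : Fin (r + 1) → Kˣ, ψ (∑ i, (t i : K) * (x : K) ^ d i) * χ (x : K)
            * ∏ i, ρ i (t i))
          = χ (x : K) * ∏ i, (∑ u : Kˣ, ψ ((u : K) * (x : K) ^ d i) * ρ i (u : K)) := by
      intro x
      rw [Fintype.prod_sum]
      rw [Finset.mul_sum]
      refine Finset.sum_congr rfl (fun t _ => ?_)
      rw [addChar_map_sum' ψ Finset.univ (fun i => (t i : K) * (x : K) ^ d i),
        Finset.prod_mul_distrib]
      ring
    calc (∑ x : Kˣ, ∑ t : Fin (r + 1) → Kˣ,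
            ψ (∑ i, (t i : K) * (x : K) ^ d i) * χ (x : K) * ∏ i, ρ i (t i))
        = ∑ x : Kˣ, χ (x : K) * ∏ i, (ρ i (((x : K) ^ d i)⁻¹) * g i) := by
          refine Finset.sum_congr rfl (fun x _ => ?_)
          rw [step x]
          congr 1
          exact Finset.prod_congr rfl (fun i _ => key x i)
      _ = (∏ i, g i) * ∑ x : Kˣ, μ (x : K) := by
          rw [Finset.mul_sum]
          refine Finset.sum_congr rfl (fun x _ => ?_)
          rw [Finset.prod_mul_distrib]
          have h1 : ∀ i : Fin (r + 1), ρ i (((x : K) ^ d i)⁻¹)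
              = ((ρ i) ^ d i) ((x⁻¹ : Kˣ) : K) := by
            intro i
            rw [MulChar.pow_apply' _ (hdpos i).ne', ← map_pow]
            congr 1
            rw [Units.val_inv_eq_inv_val, inv_pow]
          simp_rw [h1]
          rw [← mulChar_prod_apply' Finset.univ (fun i => (ρ i) ^ d i) x⁻¹]
          rw [hμ, MulChar.mul_apply, MulChar.inv_apply', Units.val_inv_eq_inv_val]
          ring
  rw [main]
  by_cases h : (∏ i, (ρ i) ^ d i) = χ
  · rw [if_pos h]
    have hμ1 : μ = 1 := by rw [hμ, h, mul_inv_cancel]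
    rw [hμ1]
    simp only [MulChar.one_apply_coe]
    rw [Finset.sum_const, Finset.card_univ, Fintype.card_units, nsmul_eq_mul]
    rw [Nat.cast_sub Fintype.card_pos, Nat.cast_one]
    ring
  · rw [if_neg h]
    have hμ1 : μ ≠ 1 := by
      intro hc
      exact h (by rwa [hμ, mul_inv_eq_one, eq_comm] at hc)
    rw [sum_units_eq_sum_field, MulChar.sum_eq_zero_of_ne_one hμ1, mul_zero]
end

section
/- For nonzero x in (ℚ/ℤ) prime to p, the Kubert V function satisfies V(x) + V(−x) = 1, where V(y/(p^f−1)) = [y]_{p,f,-}/(f(p−1)) with [y]_{p,f,-} the base-p digit sum of the representative of y mod p^f−1 in [0, p^f−2]. -/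
/-- Digit sum of the representative of `y` modulo `m` lying in `[0, m-1]`. -/
def repDigitSumNonneg (p m : ℕ) (y : ℤ) : ℕ := digitSum p (y % (m : ℤ)).toNat

/-- The Kubert `V` function evaluated at `y/(p^f - 1)`. -/
noncomputable def kubertV (p f : ℕ) (y : ℤ) : ℚ :=
  (repDigitSumNonneg p (p ^ f - 1) y : ℚ) / (f * ((p : ℚ) - 1))

lemma digitSum_step {p : ℕ} (hp : 2 ≤ p) (n : ℕ) :
    digitSum p n = n % p + digitSum p (n / p) := by
  rcases Nat.eq_zero_or_pos n with h | h
  · simp [digitSum, h]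
  · rw [digitSum, digitSum, Nat.digits_def' hp h, List.sum_cons]

lemma digitSum_split_s13 {p : ℕ} (hp : 2 ≤ p) (k : ℕ) :
    ∀ a b : ℕ, a < p ^ k → digitSum p (a + p ^ k * b) = digitSum p a + digitSum p b := by
  induction k with
  | zero =>
    intro a b ha
    have : a = 0 := by simpa using ha
    simp [this, digitSum]
  | succ k ih =>
    intro a b ha
    have hp0 : 0 < p := by omega
    have h1 : a + p ^ (k+1) * b = a + p * (p ^ k * b) := by ring
    rw [h1, digitSum_step hp, Nat.add_mul_mod_self_left, Nat.add_mul_div_left _ _ hp0,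
      ih (a / p) b (Nat.div_lt_of_lt_mul (by rwa [pow_succ, mul_comm] at ha)),
      digitSum_step hp a]
    omega

lemma digitSum_of_lt {p : ℕ} (hp : 2 ≤ p) (a : ℕ) (ha : a < p) : digitSum p a = a := by
  rcases Nat.eq_zero_or_pos a with h | h
  · simp [h, digitSum]
  · rw [digitSum, Nat.digits_def' hp h, Nat.mod_eq_of_lt ha, Nat.div_eq_of_lt ha]
    simp

lemma digitSum_complement {p : ℕ} (hp : 2 ≤ p) :
    ∀ f r : ℕ, r ≤ p ^ f - 1 → digitSum p r + digitSum p (p ^ f - 1 - r) = f * (p - 1) := by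
  intro f
  induction f with
  | zero =>
    intro r hr
    have : r = 0 := by simpa using hr
    simp [this, digitSum]
  | succ f ih =>
    intro r hr
    have hp0 : 0 < p := by omega
    have hpf : 1 ≤ p ^ f := Nat.one_le_pow _ _ hp0
    have hpf1 : 1 ≤ p ^ (f + 1) := Nat.one_le_pow _ _ hp0
    have hr0 : r % p < p := Nat.mod_lt _ hp0
    have hq : r / p ≤ p ^ f - 1 := by
      have h1 : r < p ^ (f + 1) := lt_of_le_of_lt hr (Nat.sub_lt (by omega) one_pos)
      have h2 : r < p * p ^ f := by rw [← pow_succ']; exact h1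
      have h3 := Nat.div_lt_of_lt_mul h2
      omega
    have hd : p * (r / p) + r % p = r := Nat.div_add_mod r p
    have hs : p ^ (f + 1) - 1 - r = (p - 1 - r % p) + p * (p ^ f - 1 - r / p) := by
      have hd' : (p : ℤ) * ((r : ℤ) / (p : ℤ)) + (r : ℤ) % (p : ℤ) = (r : ℤ) :=
        Int.mul_ediv_add_emod r p
      zify [hr, hq, hpf, hpf1, show r % p ≤ p - 1 by omega, show 1 ≤ p by omega]
      linear_combination hd'
    rw [hs, digitSum_step hp r]
    have hx : p - 1 - r % p < p :=
      lt_of_le_of_lt (Nat.sub_le _ _) (Nat.sub_lt (by omega) one_pos)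
    have hsplit := digitSum_split_s13 hp 1 (p - 1 - r % p) (p ^ f - 1 - r / p)
      (by rw [pow_one]; exact hx)
    rw [pow_one] at hsplit
    rw [hsplit, digitSum_of_lt hp (p - 1 - r % p) hx]
    have H := ih (r / p) hq
    have hfinal : (f + 1) * (p - 1) = f * (p - 1) + (p - 1) := by rw [Nat.succ_mul]
    rw [hfinal, ← H]
    omega

lemma geom_nat (x : ℕ) (hx : 1 ≤ x) (g : ℕ) :
    (x - 1) * ∑ i ∈ Finset.range g, x ^ i + 1 = x ^ g := by
  induction g with
  | zero => simp
  | succ g ih =>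
    rw [Finset.sum_range_succ, Nat.mul_add, pow_succ]
    have h1 : (x - 1) * x ^ g = x ^ g * x - x ^ g := by
      rw [Nat.sub_mul, one_mul, mul_comm]
    have h2 : x ^ g ≤ x ^ g * x := Nat.le_mul_of_pos_right _ hx
    omega

lemma digitSum_geom {p : ℕ} (hp : 2 ≤ p) (f r : ℕ) (hr : r < p ^ f) (g : ℕ) :
    digitSum p (r * ∑ i ∈ Finset.range g, p ^ (f * i)) = g * digitSum p r := by
  induction g with
  | zero => simp [digitSum]
  | succ g ih =>
    have hsum : ∀ n : ℕ, ∑ i ∈ Finset.range n, p ^ (f * i) = ∑ i ∈ Finset.range n, (p ^ f) ^ i := by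
      intro n; refine Finset.sum_congr rfl fun i _ => ?_; rw [pow_mul]
    have hgeom : (p ^ f - 1) * ∑ i ∈ Finset.range g, p ^ (f * i) + 1 = p ^ (f * g) := by
      rw [hsum, pow_mul]
      exact geom_nat _ (Nat.one_le_pow _ _ (by omega)) g
    have hle : r * ∑ i ∈ Finset.range g, p ^ (f * i) ≤
        (p ^ f - 1) * ∑ i ∈ Finset.range g, p ^ (f * i) :=
      Nat.mul_le_mul_right _ (by omega)
    have hlt : r * ∑ i ∈ Finset.range g, p ^ (f * i) < p ^ (f * g) := by omega
    rw [Finset.sum_range_succ, Nat.mul_add, mul_comm r (p ^ (f * g)),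
      digitSum_split_s13 hp _ _ _ hlt, ih]
    ring

lemma geom_identity {p : ℕ} (hp : 2 ≤ p) (f g : ℕ) :
    (p ^ f - 1) * ∑ i ∈ Finset.range g, p ^ (f * i) + 1 = p ^ (f * g) := by
  have hsum : ∑ i ∈ Finset.range g, p ^ (f * i) = ∑ i ∈ Finset.range g, (p ^ f) ^ i :=
    Finset.sum_congr rfl fun i _ => by rw [pow_mul]
  rw [hsum, pow_mul]
  exact geom_nat _ (Nat.one_le_pow _ _ (by omega)) g

lemma kubertV_scale (p : ℕ) (hp : 2 ≤ p) {f g : ℕ} (hf : 0 < f) (hg : 0 < g) (y : ℤ) :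
    kubertV p f y
      = kubertV p (f * g) (y * ((∑ i ∈ Finset.range g, p ^ (f * i) : ℕ) : ℤ)) := by
  set G := ∑ i ∈ Finset.range g, p ^ (f * i) with hGdef
  have hG : 0 < G :=
    Finset.sum_pos (fun i _ => pow_pos (by omega) _) (Finset.nonempty_range_iff.mpr hg.ne')
  have hpf : 1 < p ^ f := Nat.one_lt_pow hf.ne' hp
  have hpfg : 1 < p ^ (f * g) := Nat.one_lt_pow (by positivity) hp
  have hgeom : (p ^ f - 1) * G + 1 = p ^ (f * g) := geom_identity hp f g
  have hM : (0 : ℤ) < ((p ^ f - 1 : ℕ) : ℤ) := by exact_mod_cast Nat.sub_pos_of_lt hpf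
  set r := (y % ((p ^ f - 1 : ℕ) : ℤ)).toNat with hrdef
  have hr0 : 0 ≤ y % ((p ^ f - 1 : ℕ) : ℤ) := Int.emod_nonneg y (ne_of_gt hM)
  have hrcast : (r : ℤ) = y % ((p ^ f - 1 : ℕ) : ℤ) := Int.toNat_of_nonneg hr0
  have hrlt : r < p ^ f - 1 := by
    have h1 : y % ((p ^ f - 1 : ℕ) : ℤ) < ((p ^ f - 1 : ℕ) : ℤ) := Int.emod_lt_of_pos y hM
    have h2 : (r : ℤ) < ((p ^ f - 1 : ℕ) : ℤ) := hrcast ▸ h1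
    exact_mod_cast h2
  have hL : ((p ^ (f * g) - 1 : ℕ) : ℤ) = ((p ^ f - 1 : ℕ) : ℤ) * (G : ℤ) := by
    have h1 : p ^ (f * g) - 1 = (p ^ f - 1) * G := by omega
    exact_mod_cast congrArg (Nat.cast : ℕ → ℤ) h1
  have hdm := Int.mul_ediv_add_emod y ((p ^ f - 1 : ℕ) : ℤ)
  have hrGlt : r * G < p ^ (f * g) - 1 := by
    have h1 : r * G ≤ (p ^ f - 2) * G := Nat.mul_le_mul_right _ (by omega)
    have h2 : (p ^ f - 2) * G + G = (p ^ f - 1) * G := by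
      rw [← Nat.succ_mul]
      congr 1
      omega
    omega
  have hmodL : (y * (G : ℤ)) % ((p ^ (f * g) - 1 : ℕ) : ℤ) = ((r * G : ℕ) : ℤ) := by
    have hy : y = ((p ^ f - 1 : ℕ) : ℤ) * (y / ((p ^ f - 1 : ℕ) : ℤ)) + (r : ℤ) := by
      rw [hrcast]; linarith [hdm]
    have hEq : y * (G : ℤ)
        = ((r * G : ℕ) : ℤ)
          + ((p ^ (f * g) - 1 : ℕ) : ℤ) * (y / ((p ^ f - 1 : ℕ) : ℤ)) := by
      push_cast
      push_cast at hL
      linear_combination (G : ℤ) * hy - (y / ((p ^ f - 1 : ℕ) : ℤ)) * hL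
    rw [hEq, Int.add_mul_emod_self_left]
    refine Int.emod_eq_of_lt (Int.natCast_nonneg _) ?_
    exact_mod_cast hrGlt
  rw [kubertV, kubertV, repDigitSumNonneg, repDigitSumNonneg, hmodL, ← hrdef]
  rw [Int.toNat_natCast]
  have hds : digitSum p (r * G) = g * digitSum p r :=
    digitSum_geom hp f r (by omega) g
  rw [hds]
  have hf' : (f : ℚ) ≠ 0 := Nat.cast_ne_zero.mpr hf.ne'
  have hg' : (g : ℚ) ≠ 0 := Nat.cast_ne_zero.mpr hg.ne'
  have hp' : (p : ℚ) - 1 ≠ 0 := by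
    have : (2 : ℚ) ≤ (p : ℚ) := by exact_mod_cast hp
    linarith
  push_cast
  field_simp

theorem kubertV_well_defined_and_complement (p : ℕ) (hp : p.Prime) :
    (∀ f g : ℕ, 0 < f → 0 < g → ∀ y z : ℤ,
        (∃ m : ℤ, (y : ℚ) / ((p : ℚ) ^ f - 1) - (z : ℚ) / ((p : ℚ) ^ g - 1) = m) →
        kubertV p f y = kubertV p g z) ∧
    (∀ f : ℕ, 0 < f → ∀ y : ℤ, ¬ ((p : ℤ) ^ f - 1 ∣ y) →
        kubertV p f y + kubertV p f (-y) = 1) := by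
  have hp2 : 2 ≤ p := hp.two_le
  constructor
  · -- well-definedness
    intro f g hf hg y z hex
    obtain ⟨m, hm⟩ := hex
    set Gf : ℕ := ∑ i ∈ Finset.range g, p ^ (f * i) with hGf
    set Gg : ℕ := ∑ i ∈ Finset.range f, p ^ (g * i) with hGg
    have hpfQ : (1 : ℚ) < (p : ℚ) ^ f := by
      have h1 : (1 : ℚ) < (p : ℚ) := by exact_mod_cast hp2
      exact one_lt_pow₀ h1 hf.ne'
    have hpgQ : (1 : ℚ) < (p : ℚ) ^ g := by
      have h1 : (1 : ℚ) < (p : ℚ) := by exact_mod_cast hp2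
      exact one_lt_pow₀ h1 hg.ne'
    have hQf : ((p : ℚ) ^ f - 1) ≠ 0 := by linarith
    have hQg : ((p : ℚ) ^ g - 1) ≠ 0 := by linarith
    have hGfQ : ((p : ℚ) ^ f - 1) * (Gf : ℚ) = (p : ℚ) ^ (f * g) - 1 := by
      have h := geom_identity hp2 f g
      have h2 : (((p ^ f - 1) * Gf + 1 : ℕ) : ℚ) = ((p ^ (f * g) : ℕ) : ℚ) := by
        exact_mod_cast congrArg (Nat.cast : ℕ → ℚ) h
      push_cast [Nat.cast_sub (Nat.one_le_pow _ _ (by omega : 0 < p))] at h2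
      linarith
    have hGgQ : ((p : ℚ) ^ g - 1) * (Gg : ℚ) = (p : ℚ) ^ (f * g) - 1 := by
      have h := geom_identity hp2 g f
      have h2 : (((p ^ g - 1) * Gg + 1 : ℕ) : ℚ) = ((p ^ (g * f) : ℕ) : ℚ) := by
        exact_mod_cast congrArg (Nat.cast : ℕ → ℚ) h
      push_cast [Nat.cast_sub (Nat.one_le_pow _ _ (by omega : 0 < p))] at h2
      rw [mul_comm g f] at h2
      linarith
    have keyQ : (y : ℚ) * (Gf : ℚ) - (z : ℚ) * (Gg : ℚ)
        = (m : ℚ) * ((p : ℚ) ^ (f * g) - 1) := by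
      have e1 : (y : ℚ) * (Gf : ℚ)
          = ((y : ℚ) / ((p : ℚ) ^ f - 1)) * ((p : ℚ) ^ (f * g) - 1) := by
        rw [← hGfQ]
        field_simp
      have e2 : (z : ℚ) * (Gg : ℚ)
          = ((z : ℚ) / ((p : ℚ) ^ g - 1)) * ((p : ℚ) ^ (f * g) - 1) := by
        rw [← hGgQ]
        field_simp
      rw [e1, e2, ← sub_mul, hm]
    have hcast : (((p ^ (f * g) - 1 : ℕ) : ℤ) : ℚ) = (p : ℚ) ^ (f * g) - 1 := by
      push_cast [Nat.cast_sub (Nat.one_le_pow _ _ (by omega : 0 < p))]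
      ring
    have keyZ : y * (Gf : ℤ) - z * (Gg : ℤ) = m * ((p ^ (f * g) - 1 : ℕ) : ℤ) := by
      have : ((y * (Gf : ℤ) - z * (Gg : ℤ) : ℤ) : ℚ)
          = ((m * ((p ^ (f * g) - 1 : ℕ) : ℤ) : ℤ) : ℚ) := by
        push_cast
        push_cast at hcast
        rw [hcast]  -- may fail; fallback below
        exact keyQ
      exact_mod_cast this
    have hmodeq : (y * (Gf : ℤ)) % ((p ^ (f * g) - 1 : ℕ) : ℤ)
        = (z * (Gg : ℤ)) % ((p ^ (f * g) - 1 : ℕ) : ℤ) := by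
      have h1 : y * (Gf : ℤ)
          = z * (Gg : ℤ) + ((p ^ (f * g) - 1 : ℕ) : ℤ) * m := by linarith [keyZ]
      rw [h1, Int.add_mul_emod_self_left]
    calc kubertV p f y = kubertV p (f * g) (y * (Gf : ℤ)) := kubertV_scale p hp2 hf hg y
      _ = kubertV p (f * g) (z * (Gg : ℤ)) := by
          rw [kubertV, kubertV, repDigitSumNonneg, repDigitSumNonneg, hmodeq]
      _ = kubertV p (g * f) (z * (Gg : ℤ)) := by rw [Nat.mul_comm f g]
      _ = kubertV p g z := (kubertV_scale p hp2 hg hf z).symm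
  · -- complement
    intro f hf y hy
    have hpf : 1 < p ^ f := Nat.one_lt_pow hf.ne' hp2
    have hMZ : ((p ^ f - 1 : ℕ) : ℤ) = (p : ℤ) ^ f - 1 := by
      push_cast [Nat.cast_sub (Nat.one_le_pow _ _ (by omega : 0 < p))]
      ring
    have hM : (0 : ℤ) < ((p ^ f - 1 : ℕ) : ℤ) := by exact_mod_cast Nat.sub_pos_of_lt hpf
    set r := (y % ((p ^ f - 1 : ℕ) : ℤ)).toNat with hrdef
    have hr0 : 0 ≤ y % ((p ^ f - 1 : ℕ) : ℤ) := Int.emod_nonneg y (ne_of_gt hM)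
    have hrcast : (r : ℤ) = y % ((p ^ f - 1 : ℕ) : ℤ) := Int.toNat_of_nonneg hr0
    have hrlt : r < p ^ f - 1 := by
      have h1 : y % ((p ^ f - 1 : ℕ) : ℤ) < ((p ^ f - 1 : ℕ) : ℤ) := Int.emod_lt_of_pos y hM
      have h2 : (r : ℤ) < ((p ^ f - 1 : ℕ) : ℤ) := hrcast ▸ h1
      exact_mod_cast h2
    have hrpos : 0 < r := by
      rcases Nat.eq_zero_or_pos r with h | h
      · exfalso
        apply hy
        rw [← hMZ]
        apply Int.dvd_of_emod_eq_zero
        rw [← hrcast, h]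
        simp
      · exact h
    have hdm := Int.mul_ediv_add_emod y ((p ^ f - 1 : ℕ) : ℤ)
    have hneg : (-y) % ((p ^ f - 1 : ℕ) : ℤ) = ((p ^ f - 1 - r : ℕ) : ℤ) := by
      have hsub : ((p ^ f - 1 - r : ℕ) : ℤ) = ((p ^ f - 1 : ℕ) : ℤ) - (r : ℤ) := by
        push_cast [Nat.cast_sub hrlt.le]
        ring
      have key : -y = ((p ^ f - 1 - r : ℕ) : ℤ)
          + ((p ^ f - 1 : ℕ) : ℤ) * (-(y / ((p ^ f - 1 : ℕ) : ℤ)) - 1) := by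
        rw [hsub, hrcast]
        linarith [hdm]
      rw [key, Int.add_mul_emod_self_left]
      refine Int.emod_eq_of_lt (by positivity) ?_
      have : p ^ f - 1 - r < p ^ f - 1 := by omega
      exact_mod_cast this
    have hcomp := digitSum_complement hp2 f r (by omega)
    rw [kubertV, kubertV, repDigitSumNonneg, repDigitSumNonneg, hneg, ← hrdef,
      Int.toNat_natCast, ← add_div]
    have hsum : (digitSum p r : ℚ) + (digitSum p (p ^ f - 1 - r) : ℚ)
        = (f : ℚ) * ((p : ℚ) - 1) := by
      have h2 : ((digitSum p r + digitSum p (p ^ f - 1 - r) : ℕ) : ℚ)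
          = ((f * (p - 1) : ℕ) : ℚ) := by exact_mod_cast congrArg (Nat.cast : ℕ → ℚ) hcomp
      push_cast [Nat.cast_sub (by omega : 1 ≤ p)] at h2
      linarith
    rw [hsum]
    apply div_self
    have hf' : (0 : ℚ) < (f : ℚ) := by exact_mod_cast hf
    have hp' : (1 : ℚ) < (p : ℚ) := by exact_mod_cast hp2
    exact mul_ne_zero (ne_of_gt hf') (by linarith)
end
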